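/- (Corollary 3.10, Euclidean case Q̄ = ℝ^n.) Suppose the smooth vector field X on ℝ^n × ℝ^n satisfies the reduced Chaplygin equations i_X(Ω − Ξ) = dH, where Ξ is a fiber-linear semibasic two-form. If there exists a smooth nowhere-vanishing f: ℝ^n → ℝ such that (df ∧ Θ)_z(X_C(z), v) − f(q)·Ξ_z(X_C(z), v) = 0 for all z = (q,p) and all v, where X_C is the Chaplygin-rescaled vector field, then div(f^{n−1}X) = 0 identically; that is, X preserves the measure f(q)^{n−1} dq dp. -/

import Mathlib

noncomputable section

open Matrix

/-- Configuration vectors: points of `ℝⁿ`. -/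
abbrev Vec (n : ℕ) : Type := Fin n → ℝ

/-- Phase space `ℝⁿ × ℝⁿ`, points `z = (q, p)`. -/
abbrev Phase (n : ℕ) : Type := Vec n × Vec n

/-- Canonical symplectic form `Ω(u,v) = ⟨u_q, v_p⟩ − ⟨u_p, v_q⟩`. -/
def Omega {n : ℕ} (u v : Phase n) : ℝ := u.1 ⬝ᵥ v.2 - u.2 ⬝ᵥ v.1

/-- Liouville one-form `Θ_z(v) = ⟨p, v_q⟩` at `z = (q,p)`. -/
def Theta {n : ℕ} (z v : Phase n) : ℝ := z.2 ⬝ᵥ v.1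

/-- Fiber scaling `Ψ_f(q,p) = (q, f(q)·p)`. -/
def Psi {n : ℕ} (f : Vec n → ℝ) (z : Phase n) : Phase n := (z.1, f z.1 • z.2)

/-- `Ψ_{1/f}`, the inverse of `Ψ_f`. -/
def PsiInv {n : ℕ} (f : Vec n → ℝ) : Phase n → Phase n := Psi fun q => (f q)⁻¹

/-- The Chaplygin-rescaled vector field
`X_C(z) := DΨ_f(Ψ_{1/f}(z))[(1/f(q))·X(Ψ_{1/f}(z))]`. -/
def ChapRescale {n : ℕ} (f : Vec n → ℝ) (X : Phase n → Phase n) (z : Phase n) : Phase n :=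
  fderiv ℝ (Psi f) (PsiInv f z) ((f z.1)⁻¹ • X (PsiInv f z))

/-- The two-form `df ∧ Θ`. -/
def dfTheta {n : ℕ} (f : Vec n → ℝ) (z u v : Phase n) : ℝ :=
  fderiv ℝ f z.1 u.1 * (z.2 ⬝ᵥ v.1) - fderiv ℝ f z.1 v.1 * (z.2 ⬝ᵥ u.1)

/-- Divergence of a vector field: `div Y (z) = trace DY(z)`. -/
def divergence {n : ℕ} (Y : Phase n → Phase n) (z : Phase n) : ℝ :=
  LinearMap.trace ℝ (Phase n) (fderiv ℝ Y z).toLinearMap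

/-- A fiber-linear semibasic two-form on phase space: a smooth assignment
`z ↦ Ξ_z` of alternating bilinear forms whose value depends only on the base
components of its arguments, and which is linear in the fiber variable `p`. -/
structure FiberLinearSemibasicTwoForm (n : ℕ) where
  form : Phase n → Phase n → Phase n → ℝ
  smooth : ∀ u v : Phase n, ContDiff ℝ (⊤ : ℕ∞) fun z => form z u v
  alt : ∀ z u v : Phase n, form z u v = - form z v u
  add_left : ∀ (z u u' v : Phase n), form z (u + u') v = form z u v + form z u' v
  smul_left : ∀ (z : Phase n) (c : ℝ) (u v : Phase n), form z (c • u) v = c * form z u v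
  semibasic : ∀ (z u v u' v' : Phase n), u.1 = u'.1 → v.1 = v'.1 → form z u v = form z u' v'
  fiber_add : ∀ (q p p' : Vec n) (u v : Phase n),
    form (q, p + p') u v = form (q, p) u v + form (q, p') u v
  fiber_smul : ∀ (q : Vec n) (c : ℝ) (p : Vec n) (u v : Phase n),
    form (q, c • p) u v = c * form (q, p) u v



lemma clm_expand {n : ℕ} (φ : Vec n →L[ℝ] ℝ) (v : Vec n) :
    φ v = ∑ j, v j * φ (Pi.single j 1) := by
  have hv : v = ∑ j, v j • (Pi.single j 1 : Vec n) := by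
    ext k
    simp [Pi.single_apply, Finset.sum_ite_eq]
  calc φ v = φ (∑ j, v j • (Pi.single j 1 : Vec n)) := by rw [← hv]
    _ = ∑ j, v j * φ (Pi.single j 1) := by
        rw [map_sum]; simp [smul_eq_mul]

lemma trace_formula {n : ℕ} (L : Phase n →L[ℝ] Phase n) :
    LinearMap.trace ℝ (Phase n) L.toLinearMap
      = ∑ i, ((L (Pi.single i 1, 0)).1 i + (L (0, Pi.single i 1)).2 i) := by
  classical
  let b : Module.Basis (Fin n ⊕ Fin n) ℝ (Phase n) :=
    (Pi.basisFun ℝ (Fin n)).prod (Pi.basisFun ℝ (Fin n))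
  rw [LinearMap.trace_eq_matrix_trace ℝ b, Matrix.trace]
  rw [Fintype.sum_sum_type, ← Finset.sum_add_distrib]
  apply Finset.sum_congr rfl
  intro i _
  congr 1
  · simp [Matrix.diag, LinearMap.toMatrix_apply, b, Module.Basis.prod_repr_inl, Pi.basisFun_repr,
      Module.Basis.prod_apply, Pi.basisFun_apply]
  · simp [Matrix.diag, LinearMap.toMatrix_apply, b, Module.Basis.prod_repr_inr, Pi.basisFun_repr,
      Module.Basis.prod_apply, Pi.basisFun_apply]

set_option maxHeartbeats 2000000 in
theorem statement4 (n : ℕ) (hn : 1 ≤ n) (X : Phase n → Phase n) (H : Phase n → ℝ)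
    (Ξ : FiberLinearSemibasicTwoForm n) (f : Vec n → ℝ)
    (hX : ContDiff ℝ (⊤ : ℕ∞) X) (hH : ContDiff ℝ (⊤ : ℕ∞) H)
    (hf : ContDiff ℝ (⊤ : ℕ∞) f) (hf0 : ∀ q, f q ≠ 0)
    (heq : ∀ (z v : Phase n), Omega (X z) v - Ξ.form z (X z) v = fderiv ℝ H z v)
    (hvan : ∀ (z v : Phase n),
      dfTheta f z (ChapRescale f X z) v - f z.1 * Ξ.form z (ChapRescale f X z) v = 0) :
    ∀ z : Phase n, divergence (fun w => f w.1 ^ (n - 1) • X w) z = 0 := by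
  -- basic differentiability
  have hfd : Differentiable ℝ f := hf.differentiable (by simp)
  have hXd : Differentiable ℝ X := hX.differentiable (by simp)
  have hHd : Differentiable ℝ H := hH.differentiable (by simp)
  -- vanishing of Xi on semibasic-degenerate arguments
  have hXi0 : ∀ (w u : Phase n) (v : Vec n), Ξ.form w u (0, v) = 0 := by
    intro w u v
    have h1 : Ξ.form w u (0, v) = Ξ.form w u (0, 0) :=
      Ξ.semibasic w u (0, v) u (0, 0) rfl rfl
    have h2 : Ξ.form w (0,0) u = 0 := by
      have := Ξ.smul_left w 0 (0,0) u
      exact (by simpa using this : Ξ.form w 0 u = 0)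
    rw [h1, Ξ.alt, h2, neg_zero]
  -- A in terms of dH
  have hA : ∀ (w : Phase n) (j : Fin n), (X w).1 j = fderiv ℝ H w (0, Pi.single j 1) := by
    intro w j
    have := heq w (0, Pi.single j 1)
    rw [hXi0] at this
    simp [Omega, dotProduct_single] at this
    exact this
  -- derivative of Psi f
  have hPsiD : ∀ (w : Phase n), HasFDerivAt (Psi f)
      ((ContinuousLinearMap.fst ℝ (Vec n) (Vec n)).prod
        (f w.1 • ContinuousLinearMap.snd ℝ (Vec n) (Vec n)
          + ((fderiv ℝ f w.1).comp (ContinuousLinearMap.fst ℝ (Vec n) (Vec n))).smulRight w.2)) w := by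
    intro w
    have hc : HasFDerivAt (fun z : Phase n => f z.1)
        ((fderiv ℝ f w.1).comp (ContinuousLinearMap.fst ℝ (Vec n) (Vec n))) w :=
      (hfd w.1).hasFDerivAt.comp w hasFDerivAt_fst
    have h2 := hc.smul (hasFDerivAt_snd (𝕜 := ℝ) (E := Vec n) (F := Vec n))
    exact (hasFDerivAt_fst (𝕜 := ℝ) (E := Vec n) (F := Vec n)).prodMk h2
  have hPsiInv : ∀ q p : Vec n, PsiInv f (q, f q • p) = (q, p) := by
    intro q p
    simp [PsiInv, Psi, smul_smul, inv_mul_cancel₀ (hf0 q)]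
  have hXC : ∀ q p : Vec n, ChapRescale f X (q, f q • p)
      = ((f q)⁻¹ • (X (q,p)).1,
         (X (q,p)).2 + ((f q)⁻¹ * fderiv ℝ f q ((X (q,p)).1)) • p) := by
    intro q p
    rw [ChapRescale, hPsiInv, (hPsiD (q,p)).fderiv]
    simp [ContinuousLinearMap.prod_apply, smul_smul, mul_inv_cancel₀ (hf0 q), _root_.map_smul,
      mul_comm]
  have hstar : ∀ (w : Phase n) (v : Vec n),
      fderiv ℝ f w.1 ((X w).1) * (w.2 ⬝ᵥ v) - fderiv ℝ f w.1 v * (w.2 ⬝ᵥ (X w).1)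
      = f w.1 * Ξ.form w ((X w).1, 0) (v, 0) := by
    rintro ⟨q, p⟩ v
    have hv := hvan (q, f q • p) (v, 0)
    rw [hXC q p] at hv
    set A := (X (q,p)).1 with hAdef
    set B := (X (q,p)).2 with hBdef
    have hform : Ξ.form (q, f q • p)
        ((f q)⁻¹ • A, B + ((f q)⁻¹ * fderiv ℝ f q A) • p) (v, 0)
        = f q * ((f q)⁻¹ * Ξ.form (q, p) (A, 0) (v, 0)) := by
      have h1 := Ξ.semibasic (q, f q • p)
        ((f q)⁻¹ • A, B + ((f q)⁻¹ * fderiv ℝ f q A) • p) (v, 0)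
        ((f q)⁻¹ • ((A, 0) : Phase n)) (v, 0) rfl rfl
      rw [h1, Ξ.smul_left, Ξ.fiber_smul]; ring
    rw [hform] at hv
    simp only [dfTheta, _root_.map_smul] at hv
    simp only [smul_dotProduct, dotProduct_smul, smul_eq_mul] at hv
    have hf0q := hf0 q
    have key : f q * ((fderiv ℝ f q) A * (p ⬝ᵥ v) - (fderiv ℝ f q) v * (p ⬝ᵥ A))
        = f q * (f q * Ξ.form (q, p) (A, 0) (v, 0)) := by
      field_simp at hv
      linear_combination (f q) * hv
    exact mul_left_cancel₀ hf0q key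

  have hB2 : ∀ (w : Phase n) (i : Fin n), (X w).2 i
      = -fderiv ℝ H w (Pi.single i 1, 0)
        - (f w.1)⁻¹ * (fderiv ℝ f w.1 ((X w).1) * w.2 i
            - fderiv ℝ f w.1 (Pi.single i 1) * (w.2 ⬝ᵥ (X w).1)) := by
    intro w i
    have hf0w := hf0 w.1
    have h1 := heq w (Pi.single i 1, 0)
    have h2 : Ξ.form w (X w) (Pi.single i 1, 0) = Ξ.form w ((X w).1, 0) (Pi.single i 1, 0) :=
      Ξ.semibasic _ _ _ _ _ rfl rfl
    have h3 := hstar w (Pi.single i 1)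
    have h4 : Ξ.form w ((X w).1, 0) (Pi.single i 1, 0)
        = (f w.1)⁻¹ * (fderiv ℝ f w.1 ((X w).1) * w.2 i
            - fderiv ℝ f w.1 (Pi.single i 1) * (w.2 ⬝ᵥ (X w).1)) := by
      rw [eq_inv_mul_iff_mul_eq₀ hf0w]
      simpa [dotProduct_single] using h3.symm
    simp only [Omega, dotProduct_zero, dotProduct_single, mul_one] at h1
    rw [h2, h4] at h1
    linarith [h1]

  have htop1 : ((⊤:ℕ∞) : WithTop ℕ∞) + 1 ≤ ((⊤:ℕ∞) : WithTop ℕ∞) := by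
    norm_cast
  have h2top : (2 : WithTop ℕ∞) ≤ ((⊤:ℕ∞) : WithTop ℕ∞) := by
    norm_cast
  have hDH : Differentiable ℝ (fderiv ℝ H) :=
    (hH.fderiv_right htop1).differentiable (by simp)
  have hdf2 : Differentiable ℝ (fderiv ℝ f) :=
    (hf.fderiv_right htop1).differentiable (by simp)
  intro z
  obtain ⟨q, p⟩ := z
  have hf0q := hf0 q
  set e : Fin n → Vec n := (fun i => Pi.single i 1 : Fin n → Vec n) with he
  set DX : Phase n →L[ℝ] Phase n := fderiv ℝ X (q, p) with hDXdef
  set K : Phase n →L[ℝ] Phase n →L[ℝ] ℝ := fderiv ℝ (fderiv ℝ H) (q, p) with hKdef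
  have hsymm : ∀ u v : Phase n, K u v = K v u := by
    intro u v
    exact (hH.contDiffAt.isSymmSndFDerivAt (by rw [minSmoothness_of_isRCLikeNormedField]; exact h2top)) u v
  -- derivative of w ↦ dH_w(v₀)
  have hKd : ∀ v₀ : Phase n, HasFDerivAt (fun w => fderiv ℝ H w v₀) (K.flip v₀) (q, p) := by
    intro v₀
    have h := (hDH (q, p)).hasFDerivAt.clm_apply (hasFDerivAt_const v₀ (q, p))
    simpa using h
  -- derivative of component functions of X
  have hXcomp1 : ∀ j : Fin n, HasFDerivAt (fun w => (X w).1 j)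
      (((ContinuousLinearMap.proj j).comp
        (ContinuousLinearMap.fst ℝ (Vec n) (Vec n))).comp DX) (q, p) :=
    fun j => ((ContinuousLinearMap.proj j).comp
        (ContinuousLinearMap.fst ℝ (Vec n) (Vec n))).hasFDerivAt.comp (q, p)
        (hXd (q, p)).hasFDerivAt
  have hXcomp2 : ∀ i : Fin n, HasFDerivAt (fun w => (X w).2 i)
      (((ContinuousLinearMap.proj i).comp
        (ContinuousLinearMap.snd ℝ (Vec n) (Vec n))).comp DX) (q, p) :=
    fun i => ((ContinuousLinearMap.proj i).comp
        (ContinuousLinearMap.snd ℝ (Vec n) (Vec n))).hasFDerivAt.comp (q, p)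
        (hXd (q, p)).hasFDerivAt
  have hA' : ∀ (u : Phase n) (j : Fin n), (DX u).1 j = K u (0, e j) := by
    intro u j
    have h1 := hXcomp1 j
    have h2 : (fun w => (X w).1 j) = (fun w => fderiv ℝ H w (0, e j)) :=
      funext fun w => hA w j
    rw [h2] at h1
    have h3 := h1.unique (hKd (0, e j))
    have h4 := congrArg (fun T : Phase n →L[ℝ] ℝ => T u) h3
    simpa using h4

  have h_fw : HasFDerivAt (fun w : Phase n => f w.1)
      ((fderiv ℝ f q).comp (ContinuousLinearMap.fst ℝ (Vec n) (Vec n))) (q, p) :=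
    (hfd q).hasFDerivAt.comp (q, p) hasFDerivAt_fst
  have h_inv : HasFDerivAt (fun w : Phase n => (f w.1)⁻¹)
      ((-(f q ^ 2)⁻¹) • ((fderiv ℝ f q).comp (ContinuousLinearMap.fst ℝ (Vec n) (Vec n)))) (q, p) :=
    (hasDerivAt_inv hf0q).comp_hasFDerivAt (q, p) h_fw
  have h_dfw : HasFDerivAt (fun w : Phase n => fderiv ℝ f w.1)
      ((fderiv ℝ (fderiv ℝ f) q).comp (ContinuousLinearMap.fst ℝ (Vec n) (Vec n))) (q, p) :=
    (hdf2 q).hasFDerivAt.comp (q, p) hasFDerivAt_fst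
  have h_Xq : HasFDerivAt (fun w => (X w).1)
      ((ContinuousLinearMap.fst ℝ (Vec n) (Vec n)).comp DX) (q, p) :=
    (ContinuousLinearMap.fst ℝ (Vec n) (Vec n)).hasFDerivAt.comp (q, p) (hXd (q, p)).hasFDerivAt
  have h_dfA := h_dfw.clm_apply h_Xq
  have h_wi : ∀ i : Fin n, HasFDerivAt (fun w : Phase n => w.2 i)
      ((ContinuousLinearMap.proj i).comp (ContinuousLinearMap.snd ℝ (Vec n) (Vec n))) (q, p) :=
    fun i => ((ContinuousLinearMap.proj i).comp
      (ContinuousLinearMap.snd ℝ (Vec n) (Vec n))).hasFDerivAt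
  have h_dfe : ∀ i : Fin n, HasFDerivAt (fun w : Phase n => fderiv ℝ f w.1 (e i))
      ((fderiv ℝ f q).comp (0 : Phase n →L[ℝ] Vec n)
        + ((fderiv ℝ (fderiv ℝ f) q).comp
            (ContinuousLinearMap.fst ℝ (Vec n) (Vec n))).flip (e i)) (q, p) :=
    fun i => h_dfw.clm_apply (hasFDerivAt_const (e i) (q, p))
  have h_dot : HasFDerivAt (fun w : Phase n => w.2 ⬝ᵥ (X w).1)
      (∑ j : Fin n, (p j • ((((ContinuousLinearMap.proj j).comp
            (ContinuousLinearMap.fst ℝ (Vec n) (Vec n))).comp DX))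
        + (X (q, p)).1 j • ((ContinuousLinearMap.proj j).comp
            (ContinuousLinearMap.snd ℝ (Vec n) (Vec n))))) (q, p) := by
    have hsum := HasFDerivAt.fun_sum (u := Finset.univ)
      (fun j (_ : j ∈ Finset.univ) => (h_wi j).mul (hXcomp1 j))
    exact hsum
  have hDXB : ∀ i : Fin n, (DX (0, e i)).2 i
      = -(K (0, e i) (e i, 0))
        - (f q)⁻¹ * ((fderiv ℝ f q) ((X (q, p)).1) + (fderiv ℝ f q) ((DX (0, e i)).1) * p i
            - (fderiv ℝ f q) (e i) * ((X (q, p)).1 i + p ⬝ᵥ (DX (0, e i)).1)) := by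
    intro i
    have h_br := (h_dfA.mul (h_wi i)).sub ((h_dfe i).mul h_dot)
    have h_prod := h_inv.mul h_br
    have h_G := ((hKd (e i, 0)).neg).sub h_prod
    have h_left := hXcomp2 i
    have hfun : (fun w => (X w).2 i)
        = (fun w : Phase n => -(fderiv ℝ H w (e i, 0))
            - (f w.1)⁻¹ * (fderiv ℝ f w.1 ((X w).1) * w.2 i
                - fderiv ℝ f w.1 (e i) * (w.2 ⬝ᵥ (X w).1))) :=
      funext fun w => hB2 w i
    rw [hfun] at h_left
    have hEq := h_left.unique h_G
    have hval := congrArg (fun T : Phase n →L[ℝ] ℝ => T ((0, e i) : Phase n)) hEq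
    simp only [ContinuousLinearMap.comp_apply, ContinuousLinearMap.coe_fst',
      ContinuousLinearMap.coe_snd', ContinuousLinearMap.add_apply,
      ContinuousLinearMap.sub_apply, ContinuousLinearMap.neg_apply,
      ContinuousLinearMap.smul_apply, ContinuousLinearMap.flip_apply,
      ContinuousLinearMap.smulRight_apply, ContinuousLinearMap.sum_apply,
      ContinuousLinearMap.proj_apply, ContinuousLinearMap.zero_apply,
      ContinuousLinearMap.coe_comp', Function.comp_apply, map_zero, smul_eq_mul] at hval
    rw [hval]
    simp only [he, Pi.single_eq_same, dotProduct, Pi.single_apply, mul_ite, mul_one,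
      mul_zero, Finset.sum_ite_eq', Finset.mem_univ, if_true, Finset.sum_add_distrib]
    ring
  simp only [he] at hA' hDXB
  have h_pc : HasFDerivAt (fun w : Phase n => f w.1 ^ (n-1))
      ((((n-1 : ℕ) : ℝ) * f q ^ (n-1-1)) •
        ((fderiv ℝ f q).comp (ContinuousLinearMap.fst ℝ (Vec n) (Vec n)))) (q, p) :=
    (hasDerivAt_pow (n-1) (f q)).comp_hasFDerivAt (q, p) h_fw
  have h_Y := h_pc.smul (hXd (q, p)).hasFDerivAt
  have hYd : fderiv ℝ (fun w : Phase n => f w.1 ^ (n-1) • X w) (q, p)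
      = f q ^ (n-1) • DX + ((((n-1 : ℕ) : ℝ) * f q ^ (n-1-1)) •
          ((fderiv ℝ f q).comp (ContinuousLinearMap.fst ℝ (Vec n) (Vec n)))).smulRight (X (q, p)) :=
    h_Y.fderiv
  unfold divergence
  rw [hYd, trace_formula]
  simp only [ContinuousLinearMap.add_apply, ContinuousLinearMap.smul_apply,
    ContinuousLinearMap.smulRight_apply, ContinuousLinearMap.coe_comp', Function.comp_apply,
    ContinuousLinearMap.coe_fst', Prod.fst_add, Prod.snd_add, Prod.smul_fst, Prod.smul_snd,
    Pi.add_apply, Pi.smul_apply, smul_eq_mul, map_zero, mul_zero, zero_mul, add_zero]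
  have key : ∀ i : Fin n,
      f q ^ (n-1) * (DX (Pi.single i 1, 0)).1 i
        + ↑(n-1) * f q ^ (n-1-1) * (fderiv ℝ f q) (Pi.single i 1) * (X (q,p)).1 i
        + f q ^ (n-1) * (DX (0, Pi.single i 1)).2 i
      = ↑(n-1) * f q ^ (n-1-1) * ((fderiv ℝ f q) (Pi.single i 1) * (X (q,p)).1 i)
        - f q ^ (n-1) * (f q)⁻¹ * ((fderiv ℝ f q) ((X (q,p)).1)
            + (∑ j, K (0, Pi.single i 1) (0, Pi.single j 1) * (fderiv ℝ f q) (Pi.single j 1)) * p i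
            - (fderiv ℝ f q) (Pi.single i 1) * ((X (q,p)).1 i
                + ∑ j, p j * K (0, Pi.single i 1) (0, Pi.single j 1))) := by
    intro i
    have h1 : (DX (Pi.single i 1, 0)).1 i = K (0, Pi.single i 1) (Pi.single i 1, 0) := by
      rw [hA']
      exact hsymm _ _
    have h3 : (fderiv ℝ f q) ((DX (0, Pi.single i 1)).1)
        = ∑ j, K (0, Pi.single i 1) (0, Pi.single j 1) * (fderiv ℝ f q) (Pi.single j 1) := by
      rw [clm_expand]
      exact Finset.sum_congr rfl fun j _ => by rw [hA']
    have h4 : p ⬝ᵥ (DX (0, Pi.single i 1)).1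
        = ∑ j, p j * K (0, Pi.single i 1) (0, Pi.single j 1) := by
      simp only [dotProduct]
      exact Finset.sum_congr rfl fun j _ => by rw [hA']
    rw [hDXB i, h3, h4, h1]
    ring
  rw [Finset.sum_congr rfl (fun i _ => key i)]
  have hdfA : (fderiv ℝ f q) ((X (q,p)).1)
      = ∑ i, (X (q,p)).1 i * (fderiv ℝ f q) (Pi.single i 1) := clm_expand _ _
  have hswap : (∑ i, (∑ j, K (0, Pi.single i 1) (0, Pi.single j 1)
        * (fderiv ℝ f q) (Pi.single j 1)) * p i)
      = ∑ i, (fderiv ℝ f q) (Pi.single i 1)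
          * (∑ j, p j * K (0, Pi.single i 1) (0, Pi.single j 1)) := by
    simp only [Finset.sum_mul, Finset.mul_sum]
    rw [Finset.sum_comm]
    apply Finset.sum_congr rfl; intro i _
    apply Finset.sum_congr rfl; intro j _
    rw [hsymm (0, Pi.single j 1) (0, Pi.single i 1)]
    ring
  have hmpow : ((n-1 : ℕ) : ℝ) * f q ^ (n-1-1)
      = ((n-1 : ℕ) : ℝ) * (f q ^ (n-1) * (f q)⁻¹) := by
    rcases Nat.eq_zero_or_pos (n-1) with h | h
    · rw [h]; simp
    · congr 1
      have hp : f q ^ (n-1) = f q ^ (n-1-1) * f q := by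
        rw [← pow_succ, Nat.sub_add_cancel h]
      rw [hp]
      field_simp
  simp only [mul_add, mul_sub, Finset.sum_sub_distrib, Finset.sum_add_distrib,
    Finset.sum_const, Finset.card_univ, Fintype.card_fin, nsmul_eq_mul, ← Finset.mul_sum]
  rw [hswap]
  have hT1 : (∑ i, (fderiv ℝ f q) (Pi.single i 1) * (X (q,p)).1 i)
      = (fderiv ℝ f q) ((X (q,p)).1) := by
    rw [hdfA]
    exact Finset.sum_congr rfl fun i _ => mul_comm _ _
  rw [Nat.cast_sub hn, Nat.cast_one] at hmpow ⊢
  rw [hT1]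
  linear_combination ((fderiv ℝ f q) ((X (q,p)).1)) * hmpow
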